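/- arXiv:2602.11555 — 2 statements merged into one kernel-verified Lean document; each statement's English description precedes it below -/
import Mathlib

section
/- Conservation of the mass-weighted mean velocity: let (x, v) be a solution of the ICS system on [0,∞) with sup_i(‖x_i(0)‖ + ‖v_i(0)‖) < ∞, and define v_c(t) = ∑_{i=1}^∞ m_i v_i(t). Then v_c is constant along the dynamics: v_c(t) = v_c(0) for all t ≥ 0. -/
open Filter MeasureTheory
open scoped Topology

noncomputable section

/-- Componentwise sign-power map `Γ`. -/
def Gam (d : ℕ) (α : ℝ) (v : EuclideanSpace ℝ (Fin d)) : EuclideanSpace ℝ (Fin d) :=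
  WithLp.toLp 2 (fun k => Real.sign (v k) * |v k| ^ α)

/-- Right-hand side of the ICS velocity equation. -/
def icsRHS (d : ℕ) (κ α : ℝ) (m : ℕ → ℝ) (ψ : ℝ → ℝ)
    (x v : ℕ → ℝ → EuclideanSpace ℝ (Fin d)) (i : ℕ) (t : ℝ) :
    EuclideanSpace ℝ (Fin d) :=
  κ • ∑' j, (m j * ψ ‖x j t - x i t‖) • Gam d α (v j t - v i t)

/-- Solution of the infinite Cucker–Smale system on the set `s`, satisfying the ODE on `sInt`:
uniform boundedness on compact subsets, continuity, `ẋᵢ = vᵢ`, and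
`v̇ᵢ = κ ∑ⱼ mⱼ ψ(‖xⱼ-xᵢ‖) Γ(vⱼ-vᵢ)` with the series converging absolutely. -/
def IsICSSolOn (d : ℕ) (κ α : ℝ) (m : ℕ → ℝ) (ψ : ℝ → ℝ)
    (x v : ℕ → ℝ → EuclideanSpace ℝ (Fin d)) (s sInt : Set ℝ) : Prop :=
  (∀ K : Set ℝ, K ⊆ s → IsCompact K → ∃ C : ℝ, ∀ i, ∀ t ∈ K, ‖x i t‖ + ‖v i t‖ ≤ C) ∧
  (∀ i, ContinuousOn (x i) s) ∧
  (∀ i, ContinuousOn (v i) s) ∧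
  (∀ i, ∀ t ∈ sInt,
      HasDerivAt (x i) (v i t) t ∧
      Summable (fun j => ‖(m j * ψ ‖x j t - x i t‖) • Gam d α (v j t - v i t)‖) ∧
      HasDerivAt (v i) (icsRHS d κ α m ψ x v i t) t)

/-- Upper right Dini derivative `D⁺f(t) = limsup_{h→0⁺} (f(t+h)-f(t))/h`. -/
def diniUR (f : ℝ → ℝ) (t : ℝ) : ℝ :=
  limsup (fun h => (f (t + h) - f t) / h) (𝓝[>] (0 : ℝ))

/-- Lower right Dini derivative `D⁻f(t) = liminf_{h→0⁺} (f(t+h)-f(t))/h`. -/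
def diniLR (f : ℝ → ℝ) (t : ℝ) : ℝ :=
  liminf (fun h => (f (t + h) - f t) / h) (𝓝[>] (0 : ℝ))

/-- `M^(k)(t) = sup_i v_i^k(t)`. -/
def Msup (d : ℕ) (v : ℕ → ℝ → EuclideanSpace ℝ (Fin d)) (k : Fin d) (t : ℝ) : ℝ :=
  ⨆ i, v i t k

/-- `m^(k)(t) = inf_i v_i^k(t)`. -/
def minf (d : ℕ) (v : ℕ → ℝ → EuclideanSpace ℝ (Fin d)) (k : Fin d) (t : ℝ) : ℝ :=
  ⨅ i, v i t k

/-- Component velocity diameter `D_v^(k)(t) = M^(k)(t) - m^(k)(t)`. -/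
def Dv (d : ℕ) (v : ℕ → ℝ → EuclideanSpace ℝ (Fin d)) (k : Fin d) (t : ℝ) : ℝ :=
  Msup d v k t - minf d v k t

/-- Position diameter `D_x(t) = sup_{i,j} ‖x_i(t) - x_j(t)‖`. -/
def Dx (d : ℕ) (x : ℕ → ℝ → EuclideanSpace ℝ (Fin d)) (t : ℝ) : ℝ :=
  ⨆ p : ℕ × ℕ, ‖x p.1 t - x p.2 t‖

/-- Weighted `ℓ²_m` seminorm. -/
def wnorm (d : ℕ) (m : ℕ → ℝ) (u : ℕ → EuclideanSpace ℝ (Fin d)) : ℝ :=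
  Real.sqrt (∑' i, m i * ‖u i‖ ^ 2)

lemma gam_neg (d : ℕ) (α : ℝ) (u : EuclideanSpace ℝ (Fin d)) :
    Gam d α (-u) = -Gam d α u := by
  ext k
  show Real.sign ((-u) k) * |(-u) k| ^ α = -(Real.sign (u k) * |u k| ^ α)
  rw [PiLp.neg_apply, Real.sign_neg, abs_neg]
  ring

lemma abs_coord_le (d : ℕ) (u : EuclideanSpace ℝ (Fin d)) (k : Fin d) : |u k| ≤ ‖u‖ := by
  rw [EuclideanSpace.norm_eq u]
  have h1 : |u k| = Real.sqrt (‖u k‖^2) := by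
    rw [Real.sqrt_sq_eq_abs, Real.norm_eq_abs, abs_abs]
  rw [h1]
  apply Real.sqrt_le_sqrt
  exact Finset.single_le_sum (f := fun i => ‖u i‖^2) (fun i _ => sq_nonneg _) (Finset.mem_univ k)

lemma gam_norm_le (d : ℕ) {α : ℝ} (hα0 : 0 < α) (hα1 : α < 1)
    (u : EuclideanSpace ℝ (Fin d)) :
    ‖Gam d α u‖ ≤ Real.sqrt d * (1 + ‖u‖) := by
  have hb : ∀ k, ‖Gam d α u k‖ ≤ 1 + ‖u‖ := by
    intro k
    have hsgn : |Real.sign (u k)| ≤ 1 := by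
      rcases lt_trichotomy (u k) 0 with h | h | h
      · simp [Real.sign_of_neg h]
      · simp [h, Real.sign_zero]
      · simp [Real.sign_of_pos h]
    have h2 : ‖Gam d α u k‖ ≤ |u k| ^ α := by
      show |Real.sign (u k) * |u k| ^ α| ≤ |u k| ^ α
      rw [abs_mul, abs_of_nonneg (Real.rpow_nonneg (abs_nonneg _) _)]
      exact mul_le_of_le_one_left (Real.rpow_nonneg (abs_nonneg _) _) hsgn
    refine h2.trans ?_
    rcases le_or_gt (|u k|) 1 with h | h
    · have : |u k| ^ α ≤ 1 := Real.rpow_le_one (abs_nonneg _) h hα0.le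
      linarith [norm_nonneg u]
    · have h1 : |u k| ^ α ≤ |u k| ^ (1:ℝ) :=
        Real.rpow_le_rpow_of_exponent_le h.le (by linarith)
      rw [Real.rpow_one] at h1
      have := abs_coord_le d u k
      linarith
  rw [EuclideanSpace.norm_eq]
  have h1p : (0:ℝ) ≤ 1 + ‖u‖ := by positivity
  calc Real.sqrt (∑ k, ‖Gam d α u k‖^2) ≤ Real.sqrt (∑ _k : Fin d, (1 + ‖u‖)^2) := by
        apply Real.sqrt_le_sqrt
        apply Finset.sum_le_sum
        intro k _
        exact pow_le_pow_left₀ (norm_nonneg _) (hb k) 2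
    _ = Real.sqrt d * (1 + ‖u‖) := by
        rw [Finset.sum_const, Finset.card_univ, Fintype.card_fin, nsmul_eq_mul,
          Real.sqrt_mul (Nat.cast_nonneg d), Real.sqrt_sq h1p]

/-- Conservation of the mass-weighted mean velocity
`v_c(t) = ∑_i m_i v_i(t)` along the ICS dynamics. -/
theorem stmt3 (d : ℕ) (hd : 1 ≤ d) (κ : ℝ) (hκ : 0 < κ) (α : ℝ) (hα0 : 0 < α) (hα1 : α < 1)
    (m : ℕ → ℝ) (hm0 : ∀ j, 0 ≤ m j) (hmS : Summable m) (hm1 : ∑' j, m j = 1)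
    (ψ : ℝ → ℝ) (hψLip : ∃ L : NNReal, LipschitzOnWith L ψ (Set.Ici 0))
    (hψanti : AntitoneOn ψ (Set.Ici 0)) (hψ0 : ψ 0 = 1)
    (hψnn : ∀ r, 0 ≤ r → 0 ≤ ψ r)
    (x v : ℕ → ℝ → EuclideanSpace ℝ (Fin d))
    (hsol : IsICSSolOn d κ α m ψ x v (Set.Ici 0) (Set.Ioi 0))
    (hinit : ∃ C : ℝ, ∀ i, ‖x i 0‖ + ‖v i 0‖ ≤ C) :
    ∀ t : ℝ, 0 ≤ t → ∑' i, m i • v i t = ∑' i, m i • v i 0 := by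
  obtain ⟨hbdd, hxcont, hvcont, hode⟩ := hsol
  set vc : ℝ → EuclideanSpace ℝ (Fin d) := fun s => ∑' i, m i • v i s with hvc
  -- termwise bound
  have hterm : ∀ (C : ℝ) (i j : ℕ) (s : ℝ), (∀ i', ‖x i' s‖ + ‖v i' s‖ ≤ C) →
      ‖(m j * ψ ‖x j s - x i s‖) • Gam d α (v j s - v i s)‖
        ≤ m j * (Real.sqrt d * (1 + 2 * C)) := by
    intro C i j s hCb
    have hC0 : 0 ≤ C := le_trans (by positivity) (hCb 0)
    have hψr : 0 ≤ ψ ‖x j s - x i s‖ := hψnn _ (norm_nonneg _)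
    have hψ1 : ψ ‖x j s - x i s‖ ≤ 1 := by
      have := hψanti (Set.self_mem_Ici) (Set.mem_Ici.2 (norm_nonneg (x j s - x i s)))
        (norm_nonneg _)
      rwa [hψ0] at this
    have hvb : ‖v j s - v i s‖ ≤ 2 * C := by
      have h1 := hCb j; have h2 := hCb i
      have := norm_sub_le (v j s) (v i s)
      have := norm_nonneg (x j s); have := norm_nonneg (x i s)
      linarith
    have hg : ‖Gam d α (v j s - v i s)‖ ≤ Real.sqrt d * (1 + 2 * C) := by
      refine (gam_norm_le d hα0 hα1 _).trans ?_
      have : (0:ℝ) ≤ Real.sqrt d := Real.sqrt_nonneg _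
      nlinarith
    rw [norm_smul, Real.norm_eq_abs, abs_of_nonneg (mul_nonneg (hm0 j) hψr)]
    have hBnn : (0:ℝ) ≤ Real.sqrt d * (1 + 2 * C) := by positivity
    have hgnn := norm_nonneg (Gam d α (v j s - v i s))
    calc m j * ψ ‖x j s - x i s‖ * ‖Gam d α (v j s - v i s)‖
        ≤ m j * 1 * ‖Gam d α (v j s - v i s)‖ :=
          mul_le_mul_of_nonneg_right (mul_le_mul_of_nonneg_left hψ1 (hm0 j)) hgnn
      _ = m j * ‖Gam d α (v j s - v i s)‖ := by ring
      _ ≤ m j * (Real.sqrt d * (1 + 2 * C)) := mul_le_mul_of_nonneg_left hg (hm0 j)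
  -- the weighted sum of RHS vanishes
  have hzero : ∀ y : ℝ, 0 < y → ∑' i, m i • icsRHS d κ α m ψ x v i y = 0 := by
    intro y hy
    obtain ⟨C, hC⟩ := hbdd (Set.Icc 0 y) (fun s hs => hs.1) isCompact_Icc
    have hCy : ∀ i', ‖x i' y‖ + ‖v i' y‖ ≤ C := fun i' => hC i' y ⟨hy.le, le_rfl⟩
    set B : ℝ := Real.sqrt d * (1 + 2 * C) with hB
    set F : ℕ × ℕ → EuclideanSpace ℝ (Fin d) := fun p =>
      (m p.1 * (m p.2 * ψ ‖x p.2 y - x p.1 y‖)) • Gam d α (v p.2 y - v p.1 y) with hF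
    have hFbound : ∀ p : ℕ × ℕ, ‖F p‖ ≤ m p.1 * m p.2 * B := by
      intro p
      have h1 : ‖F p‖ = m p.1 * ‖(m p.2 * ψ ‖x p.2 y - x p.1 y‖) • Gam d α (v p.2 y - v p.1 y)‖ := by
        rw [hF]
        simp only [mul_smul]
        rw [norm_smul, Real.norm_eq_abs, abs_of_nonneg (hm0 p.1)]
      rw [h1, mul_assoc]
      exact mul_le_mul_of_nonneg_left (hterm C p.1 p.2 y hCy) (hm0 p.1)
    have hmaj : Summable (fun p : ℕ × ℕ => m p.1 * m p.2 * B) :=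
      (hmS.mul_of_nonneg hmS (fun j => hm0 j) (fun j => hm0 j)).mul_right B
    have hFsum : Summable F := Summable.of_norm_bounded hmaj hFbound
    have hFswap : ∀ p : ℕ × ℕ, F (p.2, p.1) = -F p := by
      intro p
      rw [hF]
      simp only
      rw [norm_sub_rev (x p.1 y), show v p.1 y - v p.2 y = -(v p.2 y - v p.1 y) by abel,
        gam_neg, smul_neg]
      ring_nf
    have hS0 : ∑' p : ℕ × ℕ, F p = 0 := by
      have h1 : ∑' p : ℕ × ℕ, F ((Equiv.prodComm ℕ ℕ) p) = ∑' p : ℕ × ℕ, F p :=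
        (Equiv.prodComm ℕ ℕ).tsum_eq F
      have h2 : ∀ p : ℕ × ℕ, F ((Equiv.prodComm ℕ ℕ) p) = -F p := fun p => hFswap p
      rw [tsum_congr h2, tsum_neg] at h1
      have h3 : (2:ℝ) • (∑' p : ℕ × ℕ, F p) = 0 := by
        rw [two_smul]
        nth_rewrite 1 [← h1]
        exact neg_add_cancel _
      rcases smul_eq_zero.mp h3 with h | h
      · norm_num at h
      · exact h
    -- relate the sum to F
    have hfib : ∀ i, HasSum (fun j => F (i, j)) (∑' j, F (i, j)) :=
      fun i => (hFsum.prod_factor i).hasSum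
    have hgsum : HasSum (fun i => ∑' j, F (i, j)) (∑' p : ℕ × ℕ, F p) :=
      hFsum.hasSum.prod_fiberwise hfib
    have hii : ∀ i, m i • icsRHS d κ α m ψ x v i y = κ • ∑' j, F (i, j) := by
      intro i
      obtain ⟨-, hsn, -⟩ := hode i y hy
      have hsum : Summable (fun j => (m j * ψ ‖x j y - x i y‖) • Gam d α (v j y - v i y)) :=
        hsn.of_norm
      rw [icsRHS, smul_comm (m i) κ]
      congr 1
      rw [← Summable.tsum_const_smul (m i) hsum]
      apply tsum_congr
      intro j
      rw [hF]
      simp only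
      rw [smul_smul]
    calc ∑' i, m i • icsRHS d κ α m ψ x v i y
        = ∑' i, κ • ∑' j, F (i, j) := tsum_congr hii
      _ = κ • ∑' p : ℕ × ℕ, F p := (hgsum.const_smul κ).tsum_eq
      _ = 0 := by rw [hS0, smul_zero]
  -- derivative of vc is zero on Ioi 0
  have hderiv : ∀ y : ℝ, 0 < y → HasDerivAt vc 0 y := by
    intro y hy
    obtain ⟨C, hC⟩ := hbdd (Set.Icc 0 (y + 1)) (fun s hs => hs.1) isCompact_Icc
    have hC0 : 0 ≤ C := le_trans (by positivity) (hC 0 0 ⟨le_rfl, by linarith⟩)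
    set u : ℕ → ℝ := fun n => m n * (κ * (Real.sqrt d * (1 + 2 * C))) with hu
    have husum : Summable u := hmS.mul_right _
    have hmemy : y ∈ Set.Ioo (0:ℝ) (y + 1) := ⟨hy, by linarith⟩
    have key := hasDerivAt_tsum_of_isPreconnected (𝕜 := ℝ)
      (g := fun n s => m n • v n s) (g' := fun n s => m n • icsRHS d κ α m ψ x v n s)
      husum (isOpen_Ioo (a := (0:ℝ)) (b := y + 1))
      ((convex_Ioo (0:ℝ) (y+1)).isPreconnected)
      (fun n s hs => ((hode n s hs.1).2.2).const_smul (m n))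
      (fun n s hs => ?_) hmemy ?_ hmemy
    · have h0 : (∑' n, m n • icsRHS d κ α m ψ x v n y) = 0 := hzero y hy
      rw [h0] at key
      exact key
    · -- bound on g'
      have hCs : ∀ i', ‖x i' s‖ + ‖v i' s‖ ≤ C := fun i' => hC i' s ⟨hs.1.le, hs.2.le⟩
      obtain ⟨-, hsn, -⟩ := hode n s hs.1
      have hrhs : ‖icsRHS d κ α m ψ x v n s‖ ≤ κ * (Real.sqrt d * (1 + 2 * C)) := by
        rw [icsRHS, norm_smul, Real.norm_eq_abs, abs_of_pos hκ]
        apply mul_le_mul_of_nonneg_left _ hκ.le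
        refine (norm_tsum_le_tsum_norm hsn).trans ?_
        have h2 : ∑' j, m j * (Real.sqrt d * (1 + 2 * C))
            = Real.sqrt d * (1 + 2 * C) := by
          rw [tsum_mul_right, hm1, one_mul]
        rw [← h2]
        exact Summable.tsum_le_tsum (fun j => hterm C n j s hCs) hsn (hmS.mul_right _)
      rw [norm_smul, Real.norm_eq_abs, abs_of_nonneg (hm0 n), hu]
      exact mul_le_mul_of_nonneg_left hrhs (hm0 n)
    · -- summability at y
      apply Summable.of_norm_bounded (hmS.mul_right C)
      intro n
      rw [norm_smul, Real.norm_eq_abs, abs_of_nonneg (hm0 n)]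
      refine mul_le_mul_of_nonneg_left ?_ (hm0 n)
      have := hC n y ⟨hy.le, by linarith⟩
      have := norm_nonneg (x n y)
      linarith
  -- conclusion
  intro t ht
  rcases eq_or_lt_of_le ht with rfl | htpos
  · rfl
  show vc t = vc 0
  obtain ⟨C, hC⟩ := hbdd (Set.Icc 0 t) (fun s hs => hs.1) isCompact_Icc
  have hvccont : ContinuousOn vc (Set.Icc 0 t) := by
    apply continuousOn_tsum
      (fun i => ((hvcont i).mono (fun s hs => hs.1)).const_smul (m i))
      (hmS.mul_right C)
    intro n s hs
    rw [Pi.smul_apply, norm_smul, Real.norm_eq_abs, abs_of_nonneg (hm0 n)]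
    refine mul_le_mul_of_nonneg_left ?_ (hm0 n)
    have := hC n s hs
    have := norm_nonneg (x n s)
    linarith
  have hconst : ∀ ε, ε ∈ Set.Ioc (0:ℝ) t → vc t = vc ε := by
    intro ε hε
    have hcont : ContinuousOn vc (Set.Icc ε t) := fun s hs =>
      ((hderiv s (lt_of_lt_of_le hε.1 hs.1)).continuousAt).continuousWithinAt
    have hder : ∀ s ∈ Set.Ico ε t, HasDerivWithinAt vc 0 (Set.Ici s) s := fun s hs =>
      (hderiv s (lt_of_lt_of_le hε.1 hs.1)).hasDerivWithinAt
    exact constant_of_has_deriv_right_zero hcont hder t ⟨hε.2, le_rfl⟩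
  have hne : (𝓝[Set.Ioc (0:ℝ) t] 0).NeBot := left_nhdsWithin_Ioc_neBot htpos
  have h1 : Tendsto vc (𝓝[Set.Ioc (0:ℝ) t] 0) (𝓝 (vc 0)) :=
    (hvccont 0 ⟨le_rfl, htpos.le⟩).mono_left (nhdsWithin_mono 0 Set.Ioc_subset_Icc_self)
  have h2 : Tendsto vc (𝓝[Set.Ioc (0:ℝ) t] 0) (𝓝 (vc t)) := by
    have heq : (fun _ : ℝ => vc t) =ᶠ[𝓝[Set.Ioc (0:ℝ) t] 0] vc :=
      eventually_mem_nhdsWithin.mono (fun ε hε => hconst ε hε)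
    exact Tendsto.congr' heq tendsto_const_nhds
  exact tendsto_nhds_unique h2 h1
end
end

section
/- Monotonicity of extremal velocities: let T ∈ (0,∞) and let (x, v) be a solution of the ICS system on [0,T] with sup_i(‖x_i(0)‖ + ‖v_i(0)‖) < ∞. Then for each k ∈ {1,…,d}, the function t ↦ M^(k)(t) is non-increasing on [0,T] and the function t ↦ m^(k)(t) is non-decreasing on [0,T]. -/
open Filter MeasureTheory
open scoped Topology

noncomputable section

open Set Filter
open scoped Topology NNReal


private lemma abs_coord_le_norm {d : ℕ} (w : EuclideanSpace ℝ (Fin d)) (k : Fin d) :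
    |w k| ≤ ‖w‖ := by
  rw [EuclideanSpace.norm_eq]
  have h1 : |w k| = Real.sqrt (‖w k‖ ^ 2) := by
    rw [Real.sqrt_sq_eq_abs]; simp [Real.norm_eq_abs, abs_abs]
  rw [h1]
  apply Real.sqrt_le_sqrt
  exact Finset.single_le_sum (fun i _ => sq_nonneg ‖w i‖) (Finset.mem_univ k)

private lemma rpow_subadd {α : ℝ} (hα0 : 0 ≤ α) (hα1 : α ≤ 1) {a b : ℝ}
    (ha : 0 ≤ a) (hb : 0 ≤ b) : (a + b) ^ α ≤ a ^ α + b ^ α := by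
  have h := NNReal.rpow_add_le_add_rpow a.toNNReal b.toNNReal hα0 hα1
  calc (a + b) ^ α = ((a.toNNReal + b.toNNReal : ℝ≥0) : ℝ) ^ α := by
        rw [NNReal.coe_add, Real.coe_toNNReal _ ha, Real.coe_toNNReal _ hb]
    _ = (((a.toNNReal + b.toNNReal) ^ α : ℝ≥0) : ℝ) := by rw [NNReal.coe_rpow]
    _ ≤ ((a.toNNReal ^ α + b.toNNReal ^ α : ℝ≥0) : ℝ) := NNReal.coe_le_coe.2 h
    _ = a ^ α + b ^ α := by
        rw [NNReal.coe_add, NNReal.coe_rpow, NNReal.coe_rpow,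
          Real.coe_toNNReal _ ha, Real.coe_toNNReal _ hb]

private lemma iInf_eq_neg_iSup_neg' (f : ℕ → ℝ) : (⨅ i, f i) = -⨆ i, -f i := by
  rw [iInf, Real.sInf_def, iSup]
  congr 2
  ext a
  simp only [Set.mem_neg, Set.mem_range]
  constructor
  · rintro ⟨i, hi⟩; exact ⟨i, by linarith⟩
  · rintro ⟨i, hi⟩; exact ⟨i, by linarith⟩

private lemma young_step {α : ℝ} (hα0 : 0 < α) (hα1 : α < 1) {a c : ℝ}
    (ha : 0 ≤ a) (hc : 0 ≤ c) :
    c * a ^ α ≤ α * a + (1 - α) * c ^ (1 / (1 - α)) := by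
  have h1α : 0 < 1 - α := by linarith
  have key := Real.geom_mean_le_arith_mean2_weighted hα0.le h1α.le ha
      (Real.rpow_nonneg hc (1 / (1 - α))) (by ring)
  have h2 : (c ^ (1 / (1 - α))) ^ (1 - α) = c := by
    rw [← Real.rpow_mul hc, one_div, inv_mul_cancel₀ (ne_of_gt h1α), Real.rpow_one]
  rw [h2] at key
  rw [mul_comm]
  exact key

private lemma deriv_le_slope {f : ℝ → ℝ} {f' : ℝ → ℝ} {a b G : ℝ} (hab : a ≤ b)
    (hc : ContinuousOn f (Set.Icc a b))
    (hd : ∀ τ ∈ Set.Ioo a b, HasDerivAt f (f' τ) τ)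
    (hle : ∀ τ ∈ Set.Ioo a b, f' τ ≤ G) :
    f b ≤ f a + G * (b - a) := by
  rcases eq_or_lt_of_le hab with rfl | hab'
  · simp
  have key : AntitoneOn (fun τ => f τ - G * τ) (Set.Icc a b) := by
    apply antitoneOn_of_deriv_nonpos (convex_Icc a b)
    · exact hc.sub (continuousOn_const.mul continuousOn_id)
    · intro τ hτ
      rw [interior_Icc] at hτ
      exact ((hd τ hτ).sub ((hasDerivAt_id τ).const_mul G)).differentiableAt.differentiableWithinAt
    · intro τ hτ
      rw [interior_Icc] at hτ
      have hder : HasDerivAt (fun τ => f τ - G * τ) (f' τ - G * 1) τ :=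
        (hd τ hτ).sub ((hasDerivAt_id τ).const_mul G)
      rw [hder.deriv]
      have := hle τ hτ
      linarith
  have h2 := key (Set.left_mem_Icc.2 hab) (Set.right_mem_Icc.2 hab) hab
  simp only at h2
  linarith

private lemma abs_sign_mul_le {u S α : ℝ} (hα : 0 < α) (hu : |u| ≤ S) :
    |Real.sign u * |u| ^ α| ≤ S ^ α := by
  rw [abs_mul]
  have h1 : |Real.sign u| ≤ 1 := by
    rcases lt_trichotomy u 0 with h|h|h
    · rw [Real.sign_of_neg h]; norm_num
    · rw [h, Real.sign_zero]; norm_num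
    · rw [Real.sign_of_pos h]; norm_num
  have hp : (0:ℝ) ≤ |u| ^ α := Real.rpow_nonneg (abs_nonneg u) α
  rw [abs_of_nonneg hp]
  calc |Real.sign u| * |u| ^ α ≤ 1 * |u| ^ α := mul_le_mul_of_nonneg_right h1 hp
    _ = |u| ^ α := one_mul _
    _ ≤ S ^ α := Real.rpow_le_rpow (abs_nonneg u) hu hα.le

private lemma sign_mul_le {u S α : ℝ} (hα : 0 < α) (hS : 0 ≤ S) (hu : u ≤ S) :
    Real.sign u * |u| ^ α ≤ S ^ α := by
  rcases le_or_gt u 0 with h | h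
  · have hsign : Real.sign u ≤ 0 := by
      rcases lt_or_eq_of_le h with h'|h'
      · rw [Real.sign_of_neg h']; norm_num
      · rw [h', Real.sign_zero]
    have h2 := mul_nonpos_of_nonpos_of_nonneg hsign (Real.rpow_nonneg (abs_nonneg u) α)
    exact le_trans h2 (Real.rpow_nonneg hS α)
  · rw [Real.sign_of_pos h, one_mul, abs_of_pos h]
    exact Real.rpow_le_rpow h.le hu hα.le



private lemma iInf_eq_neg_iSup (f : ℕ → ℝ) : (⨅ i, f i) = -⨆ i, -f i := by
  rw [iInf, Real.sInf_def, iSup]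
  congr 2
  ext a
  simp only [Set.mem_neg, Set.mem_range]
  constructor
  · rintro ⟨i, hi⟩; exact ⟨i, by linarith⟩
  · rintro ⟨i, hi⟩; exact ⟨i, by linarith⟩

private lemma tsum_gamma_abs_bound {m c g : ℕ → ℝ} {α S : ℝ} (hα : 0 < α)
    (hmS : Summable m) (hm1 : ∑' j, m j = 1)
    (hc0 : ∀ j, 0 ≤ c j) (hcm : ∀ j, c j ≤ m j)
    (hS : ∀ j, |g j| ≤ S) :
    |∑' j, c j * (Real.sign (g j) * |g j| ^ α)| ≤ S ^ α := by
  have hm0 : ∀ j, 0 ≤ m j := fun j => le_trans (hc0 j) (hcm j)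
  have hterm : ∀ j, |c j * (Real.sign (g j) * |g j| ^ α)| ≤ m j * S ^ α := by
    intro j
    rw [abs_mul, abs_of_nonneg (hc0 j)]
    exact mul_le_mul (hcm j) (abs_sign_mul_le hα (hS j)) (abs_nonneg _) (hm0 j)
  have hsumabs : Summable (fun j => |c j * (Real.sign (g j) * |g j| ^ α)|) :=
    Summable.of_nonneg_of_le (fun j => abs_nonneg _) hterm (hmS.mul_right _)
  have h1 : |∑' j, c j * (Real.sign (g j) * |g j| ^ α)|
      ≤ ∑' j, |c j * (Real.sign (g j) * |g j| ^ α)| := by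
    have h2 : ‖∑' j, c j * (Real.sign (g j) * |g j| ^ α)‖
        ≤ ∑' j, ‖c j * (Real.sign (g j) * |g j| ^ α)‖ := norm_tsum_le_tsum_norm hsumabs
    exact h2
  have h3 : ∑' j, |c j * (Real.sign (g j) * |g j| ^ α)| ≤ ∑' j, m j * S ^ α :=
    Summable.tsum_le_tsum hterm hsumabs (hmS.mul_right _)
  have h4 : ∑' j, m j * S ^ α = S ^ α := by rw [tsum_mul_right, hm1, one_mul]
  linarith

private lemma tsum_gamma_bound {m c g : ℕ → ℝ} {α S : ℝ} (hα : 0 < α)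
    (hmS : Summable m) (hm1 : ∑' j, m j = 1)
    (hc0 : ∀ j, 0 ≤ c j) (hcm : ∀ j, c j ≤ m j)
    (hsum : Summable (fun j => c j * (Real.sign (g j) * |g j| ^ α)))
    (hS0 : 0 ≤ S) (hS : ∀ j, g j ≤ S) :
    ∑' j, c j * (Real.sign (g j) * |g j| ^ α) ≤ S ^ α := by
  have hterm : ∀ j, c j * (Real.sign (g j) * |g j| ^ α) ≤ m j * S ^ α := by
    intro j
    calc c j * (Real.sign (g j) * |g j| ^ α) ≤ c j * S ^ α :=
          mul_le_mul_of_nonneg_left (sign_mul_le hα hS0 (hS j)) (hc0 j)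
      _ ≤ m j * S ^ α := mul_le_mul_of_nonneg_right (hcm j) (Real.rpow_nonneg hS0 α)
  have h3 : ∑' j, c j * (Real.sign (g j) * |g j| ^ α) ≤ ∑' j, m j * S ^ α :=
    Summable.tsum_le_tsum hterm hsum (hmS.mul_right _)
  have h4 : ∑' j, m j * S ^ α = S ^ α := by rw [tsum_mul_right, hm1, one_mul]
  linarith

private lemma core_antitone {κ α B C T : ℝ} (hκ : 0 < κ) (hα0 : 0 < α) (hα1 : α < 1)
    (hB : 0 ≤ B) (hT : 0 < T)
    {f f' : ℕ → ℝ → ℝ}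
    (hc : ∀ i, ContinuousOn (f i) (Set.Icc 0 T))
    (hd : ∀ i, ∀ t ∈ Set.Ioo 0 T, HasDerivAt (f i) (f' i t) t)
    (hCb : ∀ i, ∀ t ∈ Set.Icc 0 T, |f i t| ≤ C)
    (hBb : ∀ i, ∀ t ∈ Set.Ioo 0 T, |f' i t| ≤ B)
    (hineq : ∀ i, ∀ t ∈ Set.Ioo 0 T, f' i t ≤ κ * ((⨆ j, f j t) - f i t) ^ α) :
    AntitoneOn (fun t => ⨆ i, f i t) (Set.Icc 0 T) := by
  set M : ℝ → ℝ := fun t => ⨆ i, f i t with hM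
  have h1α : 0 < 1 - α := by linarith
  have hbdd : ∀ t ∈ Set.Icc 0 T, BddAbove (Set.range fun i => f i t) := fun t ht =>
    ⟨C, by rintro y ⟨i, rfl⟩; exact (abs_le.1 (hCb i t ht)).2⟩
  have hle : ∀ i, ∀ t ∈ Set.Icc 0 T, f i t ≤ M t := fun i t ht => le_ciSup (hbdd t ht) i
  have lipf : ∀ i, ∀ s ∈ Set.Icc 0 T, ∀ t ∈ Set.Icc 0 T, s ≤ t →
      f i t ≤ f i s + B * (t - s) ∧ f i s ≤ f i t + B * (t - s) := by
    intro i s hs t ht hst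
    have hsub : Set.Icc s t ⊆ Set.Icc 0 T := Set.Icc_subset_Icc hs.1 ht.2
    have hsubo : Set.Ioo s t ⊆ Set.Ioo 0 T := fun τ hτ =>
      ⟨lt_of_le_of_lt hs.1 hτ.1, lt_of_lt_of_le hτ.2 ht.2⟩
    constructor
    · have := deriv_le_slope hst ((hc i).mono hsub)
        (fun τ hτ => hd i τ (hsubo hτ))
        (fun τ hτ => (abs_le.1 (hBb i τ (hsubo hτ))).2)
      linarith
    · have h5 := deriv_le_slope (f := fun u => -f i u) (f' := fun u => -f' i u) (G := B) hst
        (((hc i).mono hsub).neg)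
        (fun τ hτ => (hd i τ (hsubo hτ)).neg)
        (fun τ hτ => by
          have h6 := (abs_le.1 (hBb i τ (hsubo hτ))).1
          show -f' i τ ≤ B
          linarith)
      linarith
  have lipM : ∀ s ∈ Set.Icc 0 T, ∀ t ∈ Set.Icc 0 T, s ≤ t →
      M t ≤ M s + B * (t - s) ∧ M s ≤ M t + B * (t - s) := by
    intro s hs t ht hst
    constructor
    · apply ciSup_le; intro i
      exact le_trans (lipf i s hs t ht hst).1 (by have := hle i s hs; linarith)
    · apply ciSup_le; intro i
      exact le_trans (lipf i s hs t ht hst).2 (by have := hle i t ht; linarith)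
  set q : ℝ := 1 / (1 - α) with hq
  set G : ℝ → ℝ := fun h => (1 - α) * (κ ^ q * h ^ (q - 1)) + κ * ((2 * B) ^ α * h ^ α)
    with hG
  have key : ∀ t h : ℝ, t ∈ Set.Icc 0 T → 0 < h → t + h ≤ T →
      M (t + h) ≤ M t + G h * h := by
    intro t h ht hh hth
    have hth' : (t + h : ℝ) ∈ Set.Icc 0 T := ⟨by linarith [ht.1], hth⟩
    apply ciSup_le
    intro i
    set a : ℝ := M t - f i t with ha
    have ha0 : 0 ≤ a := by have := hle i t ht; simp only [ha]; linarith
    have hsub : Set.Icc t (t + h) ⊆ Set.Icc 0 T := Set.Icc_subset_Icc ht.1 hth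
    have hsubo : Set.Ioo t (t + h) ⊆ Set.Ioo 0 T := fun τ hτ =>
      ⟨lt_of_le_of_lt ht.1 hτ.1, lt_of_lt_of_le hτ.2 hth⟩
    have hstep : f i (t + h) ≤ f i t + (κ * (a + 2 * B * h) ^ α) * h := by
      have hk := deriv_le_slope (f := f i) (f' := f' i) (G := κ * (a + 2 * B * h) ^ α)
        (le_of_lt (by linarith : t < t + h)) ((hc i).mono hsub)
        (fun τ hτ => hd i τ (hsubo hτ)) ?_
      · linarith
      intro τ hτ
      have hτT := hsubo hτ
      have hτmem : τ ∈ Set.Icc 0 T := ⟨hτT.1.le, hτT.2.le⟩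
      have h1 : M τ ≤ M t + B * (τ - t) := (lipM t ht τ hτmem hτ.1.le).1
      have h2 : f i t ≤ f i τ + B * (τ - t) := (lipf i t ht τ hτmem hτ.1.le).2
      have h3 : M τ - f i τ ≤ a + 2 * B * h := by
        have hτh : τ - t ≤ h := by linarith [hτ.2]
        have hBτ : B * (τ - t) ≤ B * h := mul_le_mul_of_nonneg_left hτh hB
        simp only [ha]; nlinarith
      have h4 : 0 ≤ M τ - f i τ := by have := hle i τ hτmem; linarith
      calc f' i τ ≤ κ * (M τ - f i τ) ^ α := hineq i τ hτT
        _ ≤ κ * (a + 2 * B * h) ^ α :=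
            mul_le_mul_of_nonneg_left (Real.rpow_le_rpow h4 h3 hα0.le) hκ.le
    have hBh : (0:ℝ) ≤ 2 * B * h := by positivity
    have hsubadd : (a + 2 * B * h) ^ α ≤ a ^ α + (2 * B * h) ^ α :=
      rpow_subadd hα0.le hα1.le ha0 hBh
    have hyoung : (κ * h) * a ^ α ≤ α * a + (1 - α) * (κ * h) ^ q :=
      young_step hα0 hα1 ha0 (by positivity)
    have hqe : (κ * h) ^ q = κ ^ q * h ^ (q - 1) * h := by
      have h2 : h ^ (q - 1) * h ^ (1 : ℝ) = h ^ q := by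
        rw [← Real.rpow_add hh]; ring_nf
      rw [Real.rpow_one] at h2
      rw [Real.mul_rpow hκ.le hh.le, ← h2]; ring
    have hbe : (2 * B * h) ^ α = (2 * B) ^ α * h ^ α :=
      Real.mul_rpow (by positivity) hh.le
    have hA2 : (κ * h) * (a + 2 * B * h) ^ α ≤ (κ * h) * a ^ α + (κ * h) * ((2*B*h) ^ α) := by
      have := mul_le_mul_of_nonneg_left hsubadd (by positivity : (0:ℝ) ≤ κ * h)
      linarith [this]
    have hfi : f i t = M t - a := by simp only [ha]; ring
    rw [hbe] at hA2
    rw [hqe] at hyoung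
    have hαa : α * a ≤ a := by
      have := mul_le_mul_of_nonneg_right hα1.le ha0
      linarith [this]
    have e1 : (κ * (a + 2 * B * h) ^ α) * h = (κ * h) * (a + 2 * B * h) ^ α := by ring
    rw [e1] at hstep
    have e2 : G h * h = (1 - α) * (κ ^ q * h ^ (q-1) * h) + (κ * h) * ((2*B) ^ α * h ^ α) := by
      simp only [hG]; ring
    linarith [hstep, hA2, hyoung, hfi, e2, hαa]
  -- limit of G
  have hGtend : Tendsto G (𝓝[>] (0:ℝ)) (𝓝 0) := by
    have hq1 : 0 < q - 1 := by
      have : 1 < q := by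
        rw [hq, lt_div_iff₀ h1α]; linarith
      linarith
    have l0 : ∀ p : ℝ, 0 < p → Tendsto (fun h : ℝ => h ^ p) (𝓝[>] (0:ℝ)) (𝓝 0) := by
      intro p hp
      have hcont : ContinuousAt (fun h : ℝ => h ^ p) 0 :=
        Real.continuousAt_rpow_const 0 p (Or.inr hp.le)
      have := hcont.tendsto
      rw [Real.zero_rpow hp.ne'] at this
      exact this.mono_left nhdsWithin_le_nhds
    have l1 := ((l0 (q-1) hq1).const_mul (κ ^ q)).const_mul (1 - α)
    have l2 := ((l0 α hα0).const_mul ((2*B) ^ α)).const_mul κ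
    have := l1.add l2
    simpa using this
  -- conclusion
  intro s hs t ht hst
  show M t ≤ M s
  rcases eq_or_lt_of_le hst with rfl | hst'
  · exact le_rfl
  have main : ∀ ε : ℝ, 0 < ε → M t ≤ M s + ε := by
    intro ε hε
    set ε' : ℝ := ε / (t - s) with hε'
    have hts : 0 < t - s := by linarith
    have hε'0 : 0 < ε' := div_pos hε hts
    have hev : ∀ᶠ h in 𝓝[>] (0:ℝ), G h < ε' := hGtend.eventually_lt_const hε'0
    rw [eventually_iff] at hev
    rcases mem_nhdsGT_iff_exists_Ioc_subset.1 hev with ⟨δ, hδ, hsubδ⟩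
    rw [Set.mem_Ioi] at hδ
    set n : ℕ := ⌈(t - s) / δ⌉₊ with hn
    have hn0 : 0 < n := Nat.ceil_pos.2 (div_pos hts hδ)
    have hn0' : (0:ℝ) < (n:ℝ) := by exact_mod_cast hn0
    set h₀ : ℝ := (t - s) / n with hh₀
    have hh₀0 : 0 < h₀ := div_pos hts hn0'
    have hnh : (n:ℝ) * h₀ = t - s := by
      rw [hh₀]; field_simp
    have hh₀δ : h₀ ≤ δ := by
      rw [hh₀, div_le_iff₀ hn0']
      have h7 := Nat.le_ceil ((t - s) / δ)
      rw [div_le_iff₀ hδ] at h7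
      rw [← hn] at h7
      linarith
    have hGh₀ : G h₀ ≤ ε' := le_of_lt (hsubδ ⟨hh₀0, hh₀δ⟩)
    have ind : ∀ j : ℕ, j ≤ n → M (s + j * h₀) ≤ M s + j * (ε' * h₀) := by
      intro j
      induction j with
      | zero => intro _; simp
      | succ j ih =>
        intro hj1
        have hj : j ≤ n := Nat.le_of_succ_le hj1
        have hjc : (j:ℝ) ≤ (n:ℝ) := by exact_mod_cast hj
        have hj1c : ((j:ℝ) + 1) ≤ (n:ℝ) := by exact_mod_cast hj1
        have hjh : (j:ℝ) * h₀ ≤ (n:ℝ) * h₀ := mul_le_mul_of_nonneg_right hjc hh₀0.le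
        have hj1h : ((j:ℝ) + 1) * h₀ ≤ (n:ℝ) * h₀ := mul_le_mul_of_nonneg_right hj1c hh₀0.le
        have hmem : s + (j:ℝ) * h₀ ∈ Set.Icc 0 T := by
          constructor
          · have h8 : (0:ℝ) ≤ (j:ℝ) * h₀ := by positivity
            linarith [hs.1]
          · have h9 : s + (j:ℝ) * h₀ ≤ t := by rw [hnh] at hjh; linarith
            linarith [ht.2]
        have hTb : s + (j:ℝ) * h₀ + h₀ ≤ T := by
          rw [hnh] at hj1h
          have : s + ((j:ℝ) + 1) * h₀ ≤ t := by linarith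
          have h10 : s + (j:ℝ) * h₀ + h₀ ≤ t := by linarith [this]
          linarith [ht.2]
        have hkey := key (s + (j:ℝ) * h₀) h₀ hmem hh₀0 hTb
        have heq : s + (j:ℝ) * h₀ + h₀ = s + (((j:ℕ)+1 : ℕ) : ℝ) * h₀ := by push_cast; ring
        rw [heq] at hkey
        have hGmul : G h₀ * h₀ ≤ ε' * h₀ := mul_le_mul_of_nonneg_right hGh₀ hh₀0.le
        have hIH := ih hj
        push_cast at hkey ⊢
        linarith
    have hfin := ind n le_rfl
    have hst2 : s + (n:ℝ) * h₀ = t := by rw [hnh]; ring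
    rw [hst2] at hfin
    have hεe : (n:ℝ) * (ε' * h₀) = ε := by
      have : (n:ℝ) * (ε' * h₀) = ε' * ((n:ℝ) * h₀) := by ring
      rw [this, hnh, hε']
      field_simp
    rw [hεe] at hfin
    exact hfin
  exact le_of_forall_pos_le_add main


/-- Monotonicity of the extremal velocities: `M^(k)` is non-increasing and
`m^(k)` is non-decreasing on `[0,T]`. -/

theorem stmt5 (d : ℕ) (hd : 1 ≤ d) (κ : ℝ) (hκ : 0 < κ) (α : ℝ) (hα0 : 0 < α) (hα1 : α < 1)
    (m : ℕ → ℝ) (hm0 : ∀ j, 0 ≤ m j) (hmS : Summable m) (hm1 : ∑' j, m j = 1)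
    (ψ : ℝ → ℝ) (hψLip : ∃ L : NNReal, LipschitzOnWith L ψ (Set.Ici 0))
    (hψanti : AntitoneOn ψ (Set.Ici 0)) (hψ0 : ψ 0 = 1)
    (hψnn : ∀ r, 0 ≤ r → 0 ≤ ψ r)
    (T : ℝ) (hT : 0 < T)
    (x v : ℕ → ℝ → EuclideanSpace ℝ (Fin d))
    (hsol : IsICSSolOn d κ α m ψ x v (Set.Icc 0 T) (Set.Ioo 0 T))
    (hinit : ∃ C : ℝ, ∀ i, ‖x i 0‖ + ‖v i 0‖ ≤ C)
    (k : Fin d) :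
    AntitoneOn (Msup d v k) (Set.Icc 0 T) ∧ MonotoneOn (minf d v k) (Set.Icc 0 T) := by
  classical
  obtain ⟨hKb, hxc, hvc, hode⟩ := hsol
  obtain ⟨C, hC⟩ := hKb (Set.Icc 0 T) (subset_refl _) isCompact_Icc
  have hC0 : 0 ≤ C := by
    have h1 := hC 0 0 ⟨le_refl 0, hT.le⟩
    have h2 := norm_nonneg (x 0 0); have h3 := norm_nonneg (v 0 0); linarith
  have hvC : ∀ i : ℕ, ∀ t ∈ Set.Icc 0 T, ‖v i t‖ ≤ C := by
    intro i t ht; have h1 := hC i t ht; have h2 := norm_nonneg (x i t); linarith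
  have hvk : ∀ i : ℕ, ∀ t ∈ Set.Icc (0:ℝ) T, |v i t k| ≤ C := fun i t ht =>
    le_trans (abs_coord_le_norm _ k) (hvC i t ht)
  have hψ1 : ∀ r : ℝ, 0 ≤ r → ψ r ≤ 1 := by
    intro r hr
    have h := hψanti (Set.mem_Ici.2 (le_refl (0:ℝ))) (Set.mem_Ici.2 hr) hr
    rw [hψ0] at h; exact h
  have hc0 : ∀ i j : ℕ, ∀ t : ℝ, 0 ≤ m j * ψ ‖x j t - x i t‖ := fun i j t =>
    mul_nonneg (hm0 j) (hψnn _ (norm_nonneg _))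
  have hcm : ∀ i j : ℕ, ∀ t : ℝ, m j * ψ ‖x j t - x i t‖ ≤ m j := by
    intro i j t
    have h := hψ1 _ (norm_nonneg (x j t - x i t))
    calc m j * ψ ‖x j t - x i t‖ ≤ m j * 1 := mul_le_mul_of_nonneg_left h (hm0 j)
      _ = m j := mul_one _
  have hsumV : ∀ i : ℕ, ∀ t ∈ Set.Ioo (0:ℝ) T,
      Summable (fun j => (m j * ψ ‖x j t - x i t‖) • Gam d α (v j t - v i t)) :=
    fun i t ht => ((hode i t ht).2.1).of_norm
  have hform : ∀ i : ℕ, ∀ t ∈ Set.Ioo (0:ℝ) T,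
      icsRHS d κ α m ψ x v i t k
        = κ * ∑' j, (m j * ψ ‖x j t - x i t‖) *
            (Real.sign (v j t k - v i t k) * |v j t k - v i t k| ^ α) := by
    intro i t ht
    have h3 : (∑' j, (m j * ψ ‖x j t - x i t‖) • Gam d α (v j t - v i t)) k
        = ∑' j, (m j * ψ ‖x j t - x i t‖) *
            (Real.sign (v j t k - v i t k) * |v j t k - v i t k| ^ α) :=
      (ContinuousLinearMap.map_tsum (EuclideanSpace.proj (𝕜 := ℝ) k) (hsumV i t ht)).trans
        (tsum_congr fun j => rfl)
    show κ * ((∑' j, (m j * ψ ‖x j t - x i t‖) • Gam d α (v j t - v i t)) k) = _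
    rw [h3]
  have hssum : ∀ i : ℕ, ∀ t ∈ Set.Ioo (0:ℝ) T,
      Summable (fun j => (m j * ψ ‖x j t - x i t‖) *
        (Real.sign (v j t k - v i t k) * |v j t k - v i t k| ^ α)) := fun i t ht =>
    (hsumV i t ht).map (EuclideanSpace.proj (𝕜 := ℝ) k).toLinearMap.toAddMonoidHom
      (EuclideanSpace.proj (𝕜 := ℝ) k).continuous |>.congr fun j => rfl
  set B : ℝ := κ * (2*C) ^ α with hB
  have hB0 : 0 ≤ B := mul_nonneg hκ.le (Real.rpow_nonneg (by linarith) α)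
  have hdk : ∀ i : ℕ, ∀ t ∈ Set.Ioo (0:ℝ) T,
      HasDerivAt (fun τ => v i τ k) (icsRHS d κ α m ψ x v i t k) t := fun i t ht =>
    (EuclideanSpace.proj (𝕜 := ℝ) k).hasFDerivAt.comp_hasDerivAt t (hode i t ht).2.2
  have hcoordc : ∀ i : ℕ, ContinuousOn (fun t => v i t k) (Set.Icc 0 T) := fun i =>
    (EuclideanSpace.proj (𝕜 := ℝ) k).continuous.comp_continuousOn (hvc i)
  have hgabs : ∀ i : ℕ, ∀ t ∈ Set.Ioo (0:ℝ) T, ∀ j : ℕ, |v j t k - v i t k| ≤ 2*C := by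
    intro i t ht j
    have htI : t ∈ Set.Icc (0:ℝ) T := ⟨ht.1.le, ht.2.le⟩
    have h1 := abs_le.1 (hvk j t htI); have h2 := abs_le.1 (hvk i t htI)
    rw [abs_le]; constructor <;> [linarith [h1.1, h2.2]; linarith [h1.2, h2.1]]
  have hBb : ∀ i : ℕ, ∀ t ∈ Set.Ioo (0:ℝ) T, |icsRHS d κ α m ψ x v i t k| ≤ B := by
    intro i t ht
    rw [hform i t ht, abs_mul, abs_of_pos hκ, hB]
    exact mul_le_mul_of_nonneg_left
      (tsum_gamma_abs_bound hα0 hmS hm1 (fun j => hc0 i j t) (fun j => hcm i j t)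
        (hgabs i t ht)) hκ.le
  have hbddsup : ∀ t ∈ Set.Icc (0:ℝ) T, BddAbove (Set.range fun j => v j t k) := by
    intro t ht
    exact ⟨C, by rintro y ⟨j, rfl⟩; exact (abs_le.1 (hvk j t ht)).2⟩
  have hbddsup2 : ∀ t ∈ Set.Icc (0:ℝ) T, BddAbove (Set.range fun j => -(v j t k)) := by
    intro t ht
    exact ⟨C, by rintro y ⟨j, rfl⟩; have := (abs_le.1 (hvk j t ht)).1; simp; linarith⟩
  -- Part 1 : Msup antitone
  have Mant : AntitoneOn (fun t => ⨆ i, v i t k) (Set.Icc 0 T) := by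
    apply core_antitone hκ hα0 hα1 hB0 hT hcoordc hdk (fun i t ht => hvk i t ht) hBb
    intro i t ht
    have htI : t ∈ Set.Icc (0:ℝ) T := ⟨ht.1.le, ht.2.le⟩
    have hS0 : 0 ≤ (⨆ j, v j t k) - v i t k := by
      have := le_ciSup (hbddsup t htI) i; linarith
    have hg : ∀ j : ℕ, v j t k - v i t k ≤ (⨆ j, v j t k) - v i t k := by
      intro j; have := le_ciSup (hbddsup t htI) j; linarith
    rw [hform i t ht]
    exact mul_le_mul_of_nonneg_left
      (tsum_gamma_bound hα0 hmS hm1 (fun j => hc0 i j t) (fun j => hcm i j t)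
        (hssum i t ht) hS0 hg) hκ.le
  -- Part 2 : reversed signs
  have hform2 : ∀ i : ℕ, ∀ t ∈ Set.Ioo (0:ℝ) T,
      -(icsRHS d κ α m ψ x v i t k)
        = κ * ∑' j, (m j * ψ ‖x j t - x i t‖) *
            (Real.sign (v i t k - v j t k) * |v i t k - v j t k| ^ α) := by
    intro i t ht
    rw [hform i t ht, ← mul_neg, ← tsum_neg]
    congr 1
    apply tsum_congr
    intro j
    have h1 : v i t k - v j t k = -(v j t k - v i t k) := by ring
    rw [h1, Real.sign_neg, abs_neg]; ring
  have hssum2 : ∀ i : ℕ, ∀ t ∈ Set.Ioo (0:ℝ) T,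
      Summable (fun j => (m j * ψ ‖x j t - x i t‖) *
        (Real.sign (v i t k - v j t k) * |v i t k - v j t k| ^ α)) := by
    intro i t ht
    have hpt : ∀ j : ℕ, -((m j * ψ ‖x j t - x i t‖) *
        (Real.sign (v j t k - v i t k) * |v j t k - v i t k| ^ α))
        = (m j * ψ ‖x j t - x i t‖) *
            (Real.sign (v i t k - v j t k) * |v i t k - v j t k| ^ α) := by
      intro j
      have h1 : v i t k - v j t k = -(v j t k - v i t k) := by ring
      rw [h1, Real.sign_neg, abs_neg]; ring
    exact (summable_congr hpt).1 (hssum i t ht).neg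
  have Nant : AntitoneOn (fun t => ⨆ i, -(v i t k)) (Set.Icc 0 T) := by
    apply core_antitone (C := C) hκ hα0 hα1 hB0 hT
      (fun i => (hcoordc i).neg)
      (fun i t ht => (hdk i t ht).neg)
      (fun i t ht => by rw [Pi.neg_apply, abs_neg]; exact hvk i t ht)
      (fun i t ht => by rw [abs_neg]; exact hBb i t ht)
    intro i t ht
    have htI : t ∈ Set.Icc (0:ℝ) T := ⟨ht.1.le, ht.2.le⟩
    have hS0 : 0 ≤ (⨆ j, -(v j t k)) - -(v i t k) := by
      have := le_ciSup (hbddsup2 t htI) i; linarith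
    have hg : ∀ j : ℕ, v i t k - v j t k ≤ (⨆ j, -(v j t k)) - -(v i t k) := by
      intro j; have := le_ciSup (hbddsup2 t htI) j; simp only at this; linarith
    rw [hform2 i t ht]
    exact mul_le_mul_of_nonneg_left
      (tsum_gamma_bound hα0 hmS hm1 (fun j => hc0 i j t) (fun j => hcm i j t)
        (hssum2 i t ht) hS0 hg) hκ.le
  constructor
  · exact Mant
  · intro s hs t ht hst
    have h1 := Nant hs ht hst
    simp only at h1
    have e1 : minf d v k s = -⨆ i, -(v i s k) := iInf_eq_neg_iSup _
    have e2 : minf d v k t = -⨆ i, -(v i t k) := iInf_eq_neg_iSup _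
    rw [e1, e2]
    linarith
end
end
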